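/- Let (u(x))_{x≥1} be i.i.d. ℕ-valued random variables with P(u(1) = k) = P_k and 0 < P_0 < 1; let U(x) = u(1) + ⋯ + u(x), V(x) = min{y : U(y) ≥ x}, v(x) = V(x) − V(x−1), and q̂(x) = P(v(x) ≥ 1). Let (η_i)_{i≥1} be i.i.d. with P(η_1 = k) = P_{k+1}/(1 − P_0) for k ≥ 0. Then for every x ≥ 1, q̂(x) = Σ_{n=0}^{x−1} P(η_1 + ⋯ + η_n = x − n − 1), where the n = 0 term is the indicator of x = 1. -/

import Mathlib

open MeasureTheory ProbabilityTheory Finset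
open scoped ENNReal

set_option maxHeartbeats 1000000

namespace Stmt13Aux

variable {Ω : Type*} [MeasurableSpace Ω] {μ : Measure Ω}

lemma meas_psum (f : ℕ → Ω → ℕ) (hm : ∀ n, Measurable (f n)) (t : ℕ) :
    Measurable (fun ω => ∑ i ∈ Finset.range t, f i ω) :=
  Finset.measurable_sum _ (fun i _ => hm i)

lemma indep_psum (f : ℕ → Ω → ℕ) (hm : ∀ n, Measurable (f n))
    (hi : iIndepFun f μ) (t : ℕ) :
    IndepFun (fun ω => ∑ i ∈ Finset.range t, f i ω) (f t) μ := by
  have h := hi.indepFun_sum_range_succ hm t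
  have : (∑ j ∈ Finset.range t, f j) = fun ω => ∑ i ∈ Finset.range t, f i ω := by
    funext ω; simp [Finset.sum_apply]
  rwa [this] at h

lemma meas_inter_eq (f : ℕ → Ω → ℕ) (hm : ∀ n, Measurable (f n))
    (hi : iIndepFun f μ)
    (t : ℕ) (A B : Set ℕ) :
    μ ((fun ω => ∑ i ∈ Finset.range t, f i ω) ⁻¹' A ∩ f t ⁻¹' B)
      = μ ((fun ω => ∑ i ∈ Finset.range t, f i ω) ⁻¹' A) * μ (f t ⁻¹' B) :=
  (indep_psum f hm hi t).measure_inter_preimage_eq_mul A B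
    (Set.to_countable A).measurableSet (Set.to_countable B).measurableSet

lemma conv (f : ℕ → Ω → ℕ) (hm : ∀ n, Measurable (f n))
    (hi : iIndepFun f μ)
    (t s : ℕ) (B : ℕ → Prop) [DecidablePred B] :
    μ {ω | (∑ i ∈ Finset.range (t+1), f i ω) = s ∧ B (f t ω)}
      = ∑ k ∈ (Finset.range (s+1)).filter B,
          μ {ω | (∑ i ∈ Finset.range t, f i ω) = s - k} * μ {ω | f t ω = k} := by
  have hset : {ω | (∑ i ∈ Finset.range (t+1), f i ω) = s ∧ B (f t ω)}
      = ⋃ k ∈ (Finset.range (s+1)).filter B,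
          ((fun ω => ∑ i ∈ Finset.range t, f i ω) ⁻¹' {s - k} ∩ f t ⁻¹' {k}) := by
    ext ω
    simp only [Set.mem_setOf_eq, Set.mem_iUnion, Set.mem_inter_iff, Finset.mem_filter,
      Finset.mem_range, Finset.sum_range_succ, Set.mem_preimage, Set.mem_singleton_iff,
      exists_prop]
    constructor
    · rintro ⟨hsum, hB⟩
      exact ⟨f t ω, ⟨by omega, hB⟩, by omega, rfl⟩
    · rintro ⟨k, ⟨hk, hB⟩, hsum, hval⟩
      rw [hval]
      exact ⟨by omega, hB⟩
  rw [hset, measure_biUnion_finset]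
  · refine Finset.sum_congr rfl fun k hk => ?_
    exact meas_inter_eq f hm hi t {s - k} {k}
  · intro k hk k' hk' hne
    simp only [Function.onFun]
    rw [Set.disjoint_left]
    rintro ω ⟨-, h2⟩ ⟨-, h2'⟩
    simp only [Set.mem_preimage, Set.mem_singleton_iff] at h2 h2'
    exact hne (by rw [← h2, ← h2'])
  · intro k hk
    exact ((meas_psum f hm t) (measurableSet_singleton _)).inter
      ((hm t) (measurableSet_singleton _))

lemma psum_mono (f : ℕ → Ω → ℕ) (ω : Ω) {a b : ℕ} (h : a ≤ b) :
    (∑ i ∈ Finset.range a, f i ω) ≤ ∑ i ∈ Finset.range b, f i ω :=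
  Finset.sum_le_sum_of_subset (Finset.range_subset_range.mpr h)

lemma blocksum (g : ℕ → ℕ) (c M : ℕ) :
    ∑ i ∈ Finset.range (c * M), g i
      = ∑ j ∈ Finset.range c, ∑ i ∈ Finset.Ico (j*M) ((j+1)*M), g i := by
  induction c with
  | zero => simp
  | succ c ih =>
    rw [Finset.sum_range_succ, ← ih, show (c+1)*M = c*M + M by ring,
      ← Finset.sum_range_add_sum_Ico g (show c*M ≤ c*M + M by omega)]

lemma null_forall_lt [IsProbabilityMeasure μ] (f : ℕ → Ω → ℕ) (hm : ∀ n, Measurable (f n))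
    (hi : iIndepFun f μ)
    (w0 : ℝ≥0∞) (hlaw : ∀ i, μ {ω | f i ω = 0} = w0) (hlt : w0 < 1) (c : ℕ) :
    μ {ω | ∀ y, (∑ i ∈ Finset.range y, f i ω) < c} = 0 := by
  have key : ∀ M : ℕ, μ {ω | ∀ y, (∑ i ∈ Finset.range y, f i ω) < c} ≤ c * w0 ^ M := by
    intro M
    have hsub : {ω | ∀ y, (∑ i ∈ Finset.range y, f i ω) < c}
        ⊆ ⋃ j ∈ Finset.range c, ⋂ i ∈ Finset.Ico (j*M) ((j+1)*M), f i ⁻¹' {0} := by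
      intro ω hω
      by_contra hcon
      simp only [Set.mem_iUnion, Set.mem_iInter, Set.mem_preimage, Set.mem_singleton_iff,
        exists_prop] at hcon
      push_neg at hcon
      have hge : c ≤ ∑ i ∈ Finset.range (c*M), f i ω := by
        rw [blocksum]
        calc c = ∑ _j ∈ Finset.range c, 1 := by simp
          _ ≤ _ := by
            refine Finset.sum_le_sum fun j hj => ?_
            obtain ⟨i, hi1, hi2⟩ := hcon j hj
            calc 1 ≤ f i ω := Nat.one_le_iff_ne_zero.mpr hi2
              _ ≤ _ := Finset.single_le_sum (f := fun i => f i ω) (fun _ _ => Nat.zero_le _) hi1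
      have := hω (c*M)
      omega
    calc μ _ ≤ μ (⋃ j ∈ Finset.range c, ⋂ i ∈ Finset.Ico (j*M) ((j+1)*M), f i ⁻¹' {0}) :=
          measure_mono hsub
      _ ≤ ∑ j ∈ Finset.range c, μ (⋂ i ∈ Finset.Ico (j*M) ((j+1)*M), f i ⁻¹' {0}) :=
          measure_biUnion_finset_le _ _
      _ = ∑ _j ∈ Finset.range c, w0 ^ M := by
          refine Finset.sum_congr rfl fun j hj => ?_
          rw [hi.measure_inter_preimage_eq_mul (Finset.Ico (j*M) ((j+1)*M))
            (sets := fun _ => ({0} : Set ℕ)) (fun i _ => measurableSet_singleton 0)]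
          have : ∀ i ∈ Finset.Ico (j*M) ((j+1)*M), μ (f i ⁻¹' {0}) = w0 := fun i _ => hlaw i
          rw [Finset.prod_congr rfl this, Finset.prod_const, Nat.card_Ico]
          congr 1
          simp [Nat.succ_mul]
      _ = c * w0 ^ M := by rw [Finset.sum_const, Finset.card_range, nsmul_eq_mul]
  have htend : Filter.Tendsto (fun M : ℕ => (c : ℝ≥0∞) * w0 ^ M) Filter.atTop (nhds 0) := by
    have h0 := ENNReal.tendsto_pow_atTop_nhds_zero_of_lt_one hlt
    simpa using ENNReal.Tendsto.const_mul h0 (Or.inr (by simp : (c:ℝ≥0∞) ≠ ⊤))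
  exact le_antisymm (ge_of_tendsto' htend key) (zero_le (a := _))

lemma hit_succ (f : ℕ → Ω → ℕ) (hm : ∀ n, Measurable (f n)) (m : ℕ) :
    μ {ω | ∃ y, (∑ i ∈ Finset.range y, f i ω) = m + 1}
      = ∑' t : ℕ, μ {ω | (∑ i ∈ Finset.range (t+1), f i ω) = m + 1 ∧ f t ω ≠ 0} := by
  have hset : {ω | ∃ y, (∑ i ∈ Finset.range y, f i ω) = m + 1}
      = ⋃ t : ℕ, {ω | (∑ i ∈ Finset.range (t+1), f i ω) = m + 1 ∧ f t ω ≠ 0} := by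
    ext ω
    simp only [Set.mem_setOf_eq, Set.mem_iUnion]
    constructor
    · rintro hex
      have hy0 := Nat.find_spec hex
      have hpos : Nat.find hex ≠ 0 := by
        intro h0
        rw [h0] at hy0
        simp at hy0
      obtain ⟨t, ht⟩ := Nat.exists_eq_succ_of_ne_zero hpos
      rw [ht, Nat.succ_eq_add_one] at hy0
      refine ⟨t, hy0, ?_⟩
      intro hf0
      have hmin := Nat.find_min hex (show t < Nat.find hex by omega)
      apply hmin
      have : (∑ i ∈ Finset.range (t+1), f i ω) = (∑ i ∈ Finset.range t, f i ω) + f t ω :=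
        Finset.sum_range_succ _ _
      omega
    · rintro ⟨t, ht, -⟩
      exact ⟨t+1, ht⟩
  rw [hset]
  refine measure_iUnion ?_ ?_
  · have aux : ∀ t t' : ℕ, t < t' →
        Disjoint {ω | (∑ i ∈ Finset.range (t+1), f i ω) = m + 1 ∧ f t ω ≠ 0}
          {ω | (∑ i ∈ Finset.range (t'+1), f i ω) = m + 1 ∧ f t' ω ≠ 0} := by
      intro t t' hlt
      rw [Set.disjoint_left]
      rintro ω ⟨h1, -⟩ ⟨h1', h2'⟩
      have hmono : (∑ i ∈ Finset.range (t+1), f i ω) ≤ ∑ i ∈ Finset.range t', f i ω :=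
        psum_mono f ω (by omega)
      have : (∑ i ∈ Finset.range (t'+1), f i ω) = (∑ i ∈ Finset.range t', f i ω) + f t' ω :=
        Finset.sum_range_succ _ _
      omega
    intro t t' hne
    rcases hne.lt_or_gt with h | h
    · exact aux t t' h
    · exact (aux t' t h).symm
  · intro t
    have : {ω | (∑ i ∈ Finset.range (t+1), f i ω) = m + 1 ∧ f t ω ≠ 0}
        = (fun ω => ∑ i ∈ Finset.range (t+1), f i ω) ⁻¹' {m+1} ∩ f t ⁻¹' ({0}ᶜ) := rfl
    rw [this]
    exact ((meas_psum f hm (t+1)) (measurableSet_singleton _)).inter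
      ((hm t) (measurableSet_singleton 0).compl)


lemma lastvisit [IsProbabilityMeasure μ] (f : ℕ → Ω → ℕ) (hm : ∀ n, Measurable (f n))
    (hi : iIndepFun f μ)
    (w0 : ℝ≥0∞) (hlaw0 : ∀ i, μ {ω | f i ω = 0} = w0) (hlt : w0 < 1) (s : ℕ) :
    (∑' t : ℕ, μ {ω | (∑ i ∈ Finset.range t, f i ω) = s}) * (1 - w0)
      = μ {ω | ∃ y, (∑ i ∈ Finset.range y, f i ω) = s} := by
  rw [← ENNReal.tsum_mul_right]
  have hterm : ∀ t : ℕ, μ {ω | (∑ i ∈ Finset.range t, f i ω) = s} * (1 - w0)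
      = μ ((fun ω => ∑ i ∈ Finset.range t, f i ω) ⁻¹' {s} ∩ f t ⁻¹' ({0}ᶜ)) := by
    intro t
    rw [meas_inter_eq f hm hi t {s} ({0}ᶜ)]
    congr 1
    rw [Set.preimage_compl, prob_compl_eq_one_sub ((hm t) (measurableSet_singleton 0))]
    rw [show (f t ⁻¹' {0}) = {ω | f t ω = 0} from rfl, hlaw0 t]
  rw [tsum_congr hterm]
  have hdisj : Pairwise (Function.onFun Disjoint
      (fun t : ℕ => (fun ω => ∑ i ∈ Finset.range t, f i ω) ⁻¹' {s} ∩ f t ⁻¹' ({0}ᶜ))) := by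
    have aux : ∀ t t' : ℕ, t < t' → Disjoint
        ((fun ω => ∑ i ∈ Finset.range t, f i ω) ⁻¹' {s} ∩ f t ⁻¹' ({0}ᶜ))
        ((fun ω => ∑ i ∈ Finset.range t', f i ω) ⁻¹' {s} ∩ f t' ⁻¹' ({0}ᶜ)) := by
      intro t t' hlt'
      rw [Set.disjoint_left]
      rintro ω ⟨h1, h2⟩ ⟨h1', -⟩
      simp only [Set.mem_preimage, Set.mem_singleton_iff, Set.mem_compl_iff] at h1 h2 h1'
      have hm1 : (∑ i ∈ Finset.range (t+1), f i ω) ≤ ∑ i ∈ Finset.range t', f i ω :=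
        psum_mono f ω (by omega)
      have hsucc : (∑ i ∈ Finset.range (t+1), f i ω)
          = (∑ i ∈ Finset.range t, f i ω) + f t ω := Finset.sum_range_succ _ _
      have h2' : f t ω ≠ 0 := h2
      omega
    intro t t' hne
    rcases hne.lt_or_gt with h | h
    · exact aux t t' h
    · exact (aux t' t h).symm
  have hmeas2 : ∀ t : ℕ, MeasurableSet
      ((fun ω => ∑ i ∈ Finset.range t, f i ω) ⁻¹' {s} ∩ f t ⁻¹' ({0}ᶜ)) := fun t =>
    ((meas_psum f hm t) (measurableSet_singleton _)).inter
      ((hm t) (measurableSet_singleton 0).compl)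
  rw [← measure_iUnion hdisj hmeas2]
  apply le_antisymm
  · refine measure_mono (Set.iUnion_subset fun t ω hω => ?_)
    exact ⟨t, hω.1⟩
  · have hHsub : {ω | ∃ y, (∑ i ∈ Finset.range y, f i ω) = s}
        ⊆ (⋃ t : ℕ, (fun ω => ∑ i ∈ Finset.range t, f i ω) ⁻¹' {s} ∩ f t ⁻¹' ({0}ᶜ))
          ∪ {ω | ∀ y, (∑ i ∈ Finset.range y, f i ω) < s + 1} := by
      intro ω hω
      by_cases hin : ω ∈ ⋃ t : ℕ, (fun ω => ∑ i ∈ Finset.range t, f i ω) ⁻¹' {s}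
          ∩ f t ⁻¹' ({0}ᶜ)
      · exact Or.inl hin
      · refine Or.inr ?_
        simp only [Set.mem_iUnion, not_exists, Set.mem_inter_iff, Set.mem_preimage,
          Set.mem_singleton_iff, Set.mem_compl_iff, not_and] at hin
        obtain ⟨t0, ht0⟩ := hω
        have hstay : ∀ d, (∑ i ∈ Finset.range (t0 + d), f i ω) = s := by
          intro d
          induction d with
          | zero => simpa using ht0
          | succ d ih =>
            have hf0 : f (t0 + d) ω = 0 := by
              have := hin (t0 + d) ih
              simpa using this
            have : (∑ i ∈ Finset.range (t0 + d + 1), f i ω)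
                = (∑ i ∈ Finset.range (t0 + d), f i ω) + f (t0 + d) ω :=
              Finset.sum_range_succ _ _
            rw [show t0 + (d+1) = t0 + d + 1 from rfl, this, hf0, ih]
            simp
        intro y
        have h1 := psum_mono f ω (show y ≤ t0 + y by omega)
        have h2 := hstay y
        omega
    calc μ {ω | ∃ y, (∑ i ∈ Finset.range y, f i ω) = s}
        ≤ μ ((⋃ t : ℕ, (fun ω => ∑ i ∈ Finset.range t, f i ω) ⁻¹' {s} ∩ f t ⁻¹' ({0}ᶜ))
            ∪ {ω | ∀ y, (∑ i ∈ Finset.range y, f i ω) < s + 1}) := measure_mono hHsub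
      _ ≤ μ (⋃ t : ℕ, (fun ω => ∑ i ∈ Finset.range t, f i ω) ⁻¹' {s} ∩ f t ⁻¹' ({0}ᶜ))
            + μ {ω | ∀ y, (∑ i ∈ Finset.range y, f i ω) < s + 1} := measure_union_le _ _
      _ = _ := by rw [null_forall_lt f hm hi w0 hlaw0 hlt (s+1), add_zero]

lemma walk_rec [IsProbabilityMeasure μ] (f : ℕ → Ω → ℕ) (hm : ∀ n, Measurable (f n))
    (hi : iIndepFun f μ)
    (w : ℕ → ℝ≥0∞) (hlaw : ∀ n k, μ {ω | f n ω = k} = w k) (hlt : w 0 < 1) (m : ℕ) :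
    μ {ω | ∃ y, (∑ i ∈ Finset.range y, f i ω) = m + 1}
      = ∑ k ∈ Finset.range (m+1),
          (w (k+1) / (1 - w 0)) * μ {ω | ∃ y, (∑ i ∈ Finset.range y, f i ω) = m - k} := by
  classical
  rw [hit_succ f hm m]
  have hconv : ∀ t, μ {ω | (∑ i ∈ Finset.range (t+1), f i ω) = m + 1 ∧ f t ω ≠ 0}
      = ∑ k ∈ (Finset.range (m+2)).filter (fun k => k ≠ 0),
          μ {ω | (∑ i ∈ Finset.range t, f i ω) = m + 1 - k} * w k := by
    intro t
    have h := conv f hm hi t (m+1) (fun k => k ≠ 0)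
    rw [h]
    exact Finset.sum_congr rfl fun k _ => by rw [hlaw t k]
  rw [tsum_congr hconv, Summable.tsum_finsetSum (fun _ _ => ENNReal.summable)]
  have h2 : (1 - w 0) ≠ 0 := by
    simp only [ne_eq, tsub_eq_zero_iff_le, not_le]
    exact hlt
  have h3 : (1 - w 0) ≠ ⊤ :=
    (tsub_le_self.trans_lt (by norm_num : (1:ℝ≥0∞) < ⊤)).ne
  have hG : ∀ sv : ℕ, (∑' t : ℕ, μ {ω | (∑ i ∈ Finset.range t, f i ω) = sv})
      = μ {ω | ∃ y, (∑ i ∈ Finset.range y, f i ω) = sv} * (1 - w 0)⁻¹ := by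
    intro sv
    have h1 := lastvisit f hm hi (w 0) (fun i => hlaw i 0) hlt sv
    calc (∑' t : ℕ, μ {ω | (∑ i ∈ Finset.range t, f i ω) = sv})
        = (∑' t : ℕ, μ {ω | (∑ i ∈ Finset.range t, f i ω) = sv})
            * ((1 - w 0) * (1 - w 0)⁻¹) := by
          rw [ENNReal.mul_inv_cancel h2 h3, mul_one]
      _ = ((∑' t : ℕ, μ {ω | (∑ i ∈ Finset.range t, f i ω) = sv}) * (1 - w 0))
            * (1 - w 0)⁻¹ := by ring
      _ = _ := by rw [h1]
  have hterm : ∀ k, (∑' t : ℕ, μ {ω | (∑ i ∈ Finset.range t, f i ω) = m + 1 - k} * w k)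
      = μ {ω | ∃ y, (∑ i ∈ Finset.range y, f i ω) = m + 1 - k} * (1 - w 0)⁻¹ * w k := by
    intro k
    rw [ENNReal.tsum_mul_right, hG]
  rw [Finset.sum_congr rfl (fun k _ => hterm k), Finset.sum_filter, Finset.sum_range_succ']
  simp only [ne_eq, Nat.succ_ne_zero, not_false_eq_true, if_true, not_true_eq_false,
    if_false, add_zero]
  refine Finset.sum_congr rfl fun j _ => ?_
  rw [show m + 1 - (j + 1) = m - j by omega, div_eq_mul_inv]
  ring

lemma sum_Icc_one {M : Type*} [AddCommMonoid M] (g : ℕ → M) (y : ℕ) :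
    ∑ i ∈ Finset.Icc 1 y, g i = ∑ i ∈ Finset.range y, g (i+1) := by
  induction y with
  | zero => simp
  | succ y ih =>
    rw [Finset.sum_Icc_succ_top (by omega), ih, Finset.sum_range_succ]

lemma tri (m : ℕ) (F : ℕ → ℕ → ℝ≥0∞) :
    ∑ n ∈ Finset.range (m+1), ∑ k ∈ Finset.range (m - n + 1), F n k
      = ∑ k ∈ Finset.range (m+1), ∑ n ∈ Finset.range (m - k + 1), F n k := by
  rw [Finset.sum_sigma', Finset.sum_sigma']
  refine Finset.sum_nbij' (fun p => ⟨p.2, p.1⟩) (fun p => ⟨p.2, p.1⟩) ?_ ?_ ?_ ?_ ?_ <;>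
    simp only [Finset.mem_sigma, Finset.mem_range] <;>
    first
      | (rintro ⟨a, b⟩ ⟨h1, h2⟩; constructor <;> omega)
      | (rintro ⟨a, b⟩ _; rfl)

lemma rec_unique (a b c : ℕ → ℝ≥0∞) (h0 : a 0 = b 0)
    (ha : ∀ m, a (m+1) = ∑ k ∈ Finset.range (m+1), c k * a (m-k))
    (hb : ∀ m, b (m+1) = ∑ k ∈ Finset.range (m+1), c k * b (m-k)) : ∀ m, a m = b m := by
  intro m
  induction m using Nat.strong_induction_on with
  | _ m ih =>
    match m with
    | 0 => exact h0
    | m+1 =>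
      rw [ha, hb]
      exact Finset.sum_congr rfl fun k _ => by rw [ih (m-k) (by omega)]

lemma rseq_rec (g : ℕ → ℕ → ℝ≥0∞) (c : ℕ → ℝ≥0∞)
    (hg0 : ∀ s, g 0 (s+1) = 0)
    (hgs : ∀ n s, g (n+1) s = ∑ k ∈ Finset.range (s+1), c k * g n (s - k)) (m : ℕ) :
    (∑ n ∈ Finset.range (m+2), g n (m+1-n))
      = ∑ k ∈ Finset.range (m+1), c k * (∑ n ∈ Finset.range (m-k+1), g n (m-k-n)) := by
  rw [Finset.sum_range_succ']
  rw [show m + 1 - 0 = m + 1 from rfl, hg0 m, add_zero]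
  have step1 : ∀ j ∈ Finset.range (m+1), g (j+1) (m+1-(j+1))
      = ∑ k ∈ Finset.range (m - j + 1), c k * g j (m - j - k) := by
    intro j hj
    rw [show m + 1 - (j+1) = m - j by omega, hgs j (m-j)]
  rw [Finset.sum_congr rfl step1, tri]
  refine Finset.sum_congr rfl fun k _ => ?_
  rw [Finset.mul_sum]
  refine Finset.sum_congr rfl fun n _ => ?_
  rw [show m - n - k = m - k - n by omega]

end Stmt13Aux

open Stmt13Aux in
/-- Representation of `q̂(x) = P(v(x) ≥ 1)` in terms of an i.i.d. sequence
`(ηᵢ)` with `P(η₁ = k) = P_{k+1}/(1 - P₀)`: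
`q̂(x) = ∑_{n=0}^{x-1} P(η₁ + ⋯ + ηₙ = x - n - 1)`. -/
theorem stmt_13 {Ω : Type*} [MeasurableSpace Ω] (μ : Measure Ω) [IsProbabilityMeasure μ]
    (u : ℕ → Ω → ℕ) (hmeas : ∀ x : ℕ, Measurable (u x))
    (hindep : iIndepFun (fun n : ℕ => u (n + 1)) μ)
    (P : ℕ → ℝ≥0∞) (hdist : ∀ x : ℕ, 1 ≤ x → ∀ k : ℕ, μ {ω | u x ω = k} = P k)
    (hP0pos : 0 < P 0) (hP0lt : P 0 < 1)
    (U : Ω → ℕ → ℕ) (hU : ∀ ω : Ω, ∀ x : ℕ, U ω x = ∑ i ∈ Finset.Icc 1 x, u i ω)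
    (V : Ω → ℕ → ℕ) (hV : ∀ ω : Ω, ∀ x : ℕ, V ω x = sInf {y : ℕ | x ≤ U ω y})
    (v : ℕ → Ω → ℕ) (hv : ∀ x : ℕ, 1 ≤ x → ∀ ω : Ω, v x ω = V ω x - V ω (x - 1))
    (qhat : ℕ → ℝ≥0∞) (hq : ∀ x : ℕ, 1 ≤ x → qhat x = μ {ω | 1 ≤ v x ω})
    {Ω' : Type*} [MeasurableSpace Ω'] (μ' : Measure Ω') [IsProbabilityMeasure μ']
    (η : ℕ → Ω' → ℕ) (hηmeas : ∀ n : ℕ, Measurable (η n))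
    (hηindep : iIndepFun (fun n : ℕ => η (n + 1)) μ')
    (hηdist : ∀ n : ℕ, 1 ≤ n → ∀ k : ℕ, μ' {ω | η n ω = k} = P (k + 1) / (1 - P 0)) :
    ∀ x : ℕ, 1 ≤ x →
      qhat x =
        ∑ n ∈ Finset.range x, μ' {ω | ∑ i ∈ Finset.Icc 1 n, η i ω = x - n - 1} := by
  intro x hx
  obtain ⟨m, rfl⟩ : ∃ m, x = m + 1 := ⟨x - 1, by omega⟩
  set u' : ℕ → Ω → ℕ := fun n => u (n+1) with hu'def
  set η' : ℕ → Ω' → ℕ := fun n => η (n+1) with hη'def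
  have hu'm : ∀ n, Measurable (u' n) := fun n => hmeas (n+1)
  have hη'm : ∀ n, Measurable (η' n) := fun n => hηmeas (n+1)
  have hu'law : ∀ n k, μ {ω | u' n ω = k} = P k := fun n k => hdist (n+1) (by omega) k
  have hη'law : ∀ n k, μ' {ω | η' n ω = k} = P (k+1) / (1 - P 0) :=
    fun n k => hηdist (n+1) (by omega) k
  have hU' : ∀ ω y, U ω y = ∑ i ∈ Finset.range y, u' i ω := by
    intro ω y
    rw [hU ω y, sum_Icc_one]
  set a : ℕ → ℝ≥0∞ := fun s => μ {ω | ∃ y, (∑ i ∈ Finset.range y, u' i ω) = s} with hadef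
  set g : ℕ → ℕ → ℝ≥0∞ := fun n s => μ' {ω | (∑ i ∈ Finset.range n, η' i ω) = s} with hgdef
  set b : ℕ → ℝ≥0∞ := fun s => ∑ n ∈ Finset.range (s+1), g n (s - n) with hbdef
  set c : ℕ → ℝ≥0∞ := fun k => P (k+1) / (1 - P 0) with hcdef
  -- LHS equals a m
  have hvset : {ω : Ω | 1 ≤ v (m+1) ω}
      = {ω | ∃ y, (∑ i ∈ Finset.range y, u' i ω) = m}
        ∩ {ω | ∃ y, m + 1 ≤ ∑ i ∈ Finset.range y, u' i ω} := by
    ext ω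
    simp only [Set.mem_setOf_eq, Set.mem_inter_iff]
    rw [hv (m+1) (by omega) ω, hV ω (m+1), hV ω (m+1-1),
      show m + 1 - 1 = m from rfl]
    have hs1 : {y : ℕ | m + 1 ≤ U ω y} = {y | m + 1 ≤ ∑ i ∈ Finset.range y, u' i ω} := by
      ext y; rw [Set.mem_setOf_eq, Set.mem_setOf_eq, hU' ω y]
    have hs2 : {y : ℕ | m ≤ U ω y} = {y | m ≤ ∑ i ∈ Finset.range y, u' i ω} := by
      ext y; rw [Set.mem_setOf_eq, Set.mem_setOf_eq, hU' ω y]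
    rw [hs1, hs2]
    by_cases hR : ∃ y, m + 1 ≤ ∑ i ∈ Finset.range y, u' i ω
    · have hA : {y | m + 1 ≤ ∑ i ∈ Finset.range y, u' i ω}.Nonempty := hR
      have hB : {y | m ≤ ∑ i ∈ Finset.range y, u' i ω}.Nonempty :=
        ⟨hR.choose, le_trans (by omega) hR.choose_spec⟩
      have hAmem := Nat.sInf_mem hA
      have hBmem := Nat.sInf_mem hB
      simp only [Set.mem_setOf_eq] at hAmem hBmem
      constructor
      · intro h1
        refine ⟨⟨sInf {y | m ≤ ∑ i ∈ Finset.range y, u' i ω}, ?_⟩, hR⟩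
        have hnot : sInf {y | m ≤ ∑ i ∈ Finset.range y, u' i ω}
            ∉ {y | m + 1 ≤ ∑ i ∈ Finset.range y, u' i ω} :=
          Nat.notMem_of_lt_sInf (by omega)
        simp only [Set.mem_setOf_eq, not_le] at hnot
        omega
      · rintro ⟨⟨t, ht⟩, -⟩
        have h1 : sInf {y | m ≤ ∑ i ∈ Finset.range y, u' i ω} ≤ t :=
          Nat.sInf_le (by simp only [Set.mem_setOf_eq]; omega)
        have h2 := psum_mono u' ω h1
        have h3 : sInf {y | m ≤ ∑ i ∈ Finset.range y, u' i ω}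
            < sInf {y | m + 1 ≤ ∑ i ∈ Finset.range y, u' i ω} := by
          by_contra hcon
          push_neg at hcon
          have := psum_mono u' ω hcon
          omega
        omega
    · have hAempty : {y | m + 1 ≤ ∑ i ∈ Finset.range y, u' i ω} = ∅ := by
        rw [Set.eq_empty_iff_forall_notMem]
        intro y hy
        exact hR ⟨y, hy⟩
      rw [hAempty, Nat.sInf_empty]
      constructor
      · intro h; omega
      · rintro ⟨-, hy⟩; exact absurd hy hR
  have hRnull : μ {ω | ∃ y, m + 1 ≤ ∑ i ∈ Finset.range y, u' i ω}ᶜ = 0 := by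
    have hcompl : {ω | ∃ y, m + 1 ≤ ∑ i ∈ Finset.range y, u' i ω}ᶜ
        = {ω | ∀ y, (∑ i ∈ Finset.range y, u' i ω) < m + 1} := by
      ext ω
      simp only [Set.mem_compl_iff, Set.mem_setOf_eq, not_exists, not_le]
    rw [hcompl]
    exact null_forall_lt u' hu'm hindep (P 0) (fun i => hu'law i 0) hP0lt (m+1)
  have hinter : μ ({ω | ∃ y, (∑ i ∈ Finset.range y, u' i ω) = m}
      ∩ {ω | ∃ y, m + 1 ≤ ∑ i ∈ Finset.range y, u' i ω}) = a m := by
    refine le_antisymm (measure_mono Set.inter_subset_left) ?_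
    calc a m ≤ μ (({ω | ∃ y, (∑ i ∈ Finset.range y, u' i ω) = m}
          ∩ {ω | ∃ y, m + 1 ≤ ∑ i ∈ Finset.range y, u' i ω})
          ∪ {ω | ∃ y, m + 1 ≤ ∑ i ∈ Finset.range y, u' i ω}ᶜ) := by
          refine measure_mono fun ω hω => ?_
          by_cases h : ω ∈ {ω | ∃ y, m + 1 ≤ ∑ i ∈ Finset.range y, u' i ω}
          · exact Or.inl ⟨hω, h⟩
          · exact Or.inr h
      _ ≤ μ ({ω | ∃ y, (∑ i ∈ Finset.range y, u' i ω) = m}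
          ∩ {ω | ∃ y, m + 1 ≤ ∑ i ∈ Finset.range y, u' i ω})
          + μ {ω | ∃ y, m + 1 ≤ ∑ i ∈ Finset.range y, u' i ω}ᶜ := measure_union_le _ _
      _ = _ := by rw [hRnull, add_zero]
  have hLHS : qhat (m+1) = a m := by
    rw [hq (m+1) (by omega), hvset, hinter]
  -- recursions
  have harec : ∀ s, a (s+1) = ∑ k ∈ Finset.range (s+1), c k * a (s-k) := fun s =>
    walk_rec u' hu'm hindep P hu'law hP0lt s
  have hg0 : ∀ s, g 0 (s+1) = 0 := by
    intro s
    have : {ω : Ω' | (∑ i ∈ Finset.range 0, η' i ω) = s+1} = ∅ := by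
      ext ω; simp
    rw [hgdef]
    simp only [this, measure_empty]
  have hgs : ∀ n s, g (n+1) s = ∑ k ∈ Finset.range (s+1), c k * g n (s - k) := by
    intro n s
    have hand : {ω : Ω' | (∑ i ∈ Finset.range (n+1), η' i ω) = s}
        = {ω | (∑ i ∈ Finset.range (n+1), η' i ω) = s ∧ (fun _ : ℕ => True) (η' n ω)} := by
      ext ω; simp
    have hcv := conv η' hη'm hηindep n s (fun _ => True)
    rw [hgdef]
    simp only []
    rw [hand, hcv, Finset.filter_true]
    refine Finset.sum_congr rfl fun k _ => ?_
    rw [hη'law n k, mul_comm]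
  have hbrec : ∀ s, b (s+1) = ∑ k ∈ Finset.range (s+1), c k * b (s-k) := by
    intro s
    rw [hbdef]
    simp only []
    exact rseq_rec g c hg0 hgs s
  have h0 : a 0 = b 0 := by
    have ha0 : {ω : Ω | ∃ y, (∑ i ∈ Finset.range y, u' i ω) = 0} = Set.univ := by
      ext ω
      simp only [Set.mem_setOf_eq, Set.mem_univ, iff_true]
      exact ⟨0, by simp⟩
    have hb0 : {ω : Ω' | (∑ i ∈ Finset.range 0, η' i ω) = 0} = Set.univ := by
      ext ω; simp
    have l : a 0 = 1 := by
      simp only [hadef, ha0, measure_univ]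
    have r : b 0 = 1 := by
      simp only [hbdef, hgdef]
      rw [Finset.sum_range_one]
      simp
    rw [l, r]
  have hab : a m = b m := rec_unique a b c h0 harec hbrec m
  -- RHS equals b m
  have hRHS : (∑ n ∈ Finset.range (m+1), μ' {ω | ∑ i ∈ Finset.Icc 1 n, η i ω = m + 1 - n - 1})
      = b m := by
    rw [hbdef]
    refine Finset.sum_congr rfl fun n hn => ?_
    have hset : {ω : Ω' | ∑ i ∈ Finset.Icc 1 n, η i ω = m + 1 - n - 1}
        = {ω | (∑ i ∈ Finset.range n, η' i ω) = m - n} := by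
      ext ω
      rw [Set.mem_setOf_eq, Set.mem_setOf_eq, sum_Icc_one,
        show m + 1 - n - 1 = m - n by omega]
    rw [hset]
  rw [hLHS, hab, ← hRHS]
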